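/- Let a ∈ ℝ and b ∈ ℝ² with b ≠ 0, and let c ∈ ℝ. Then the minimum over all f ∈ ℝ² of c + ‖f‖² + 2|a + b₂f₁ - b₁f₂| equals c + 2|a| - ‖b‖² if |a| ≥ ‖b‖², and c + a²/‖b‖² otherwise; in particular it equals max over β ∈ [0,1] of (c + 2|a|β - ‖b‖²β²). -/

import Mathlib

noncomputable section

/-- For `a ∈ ℝ`, `b = (b₁,b₂) ≠ 0` and `c ∈ ℝ`, the minimum over `f ∈ ℝ²` of
`c + ‖f‖² + 2|a + b₂f₁ - b₁f₂|` is `c + 2|a| - ‖b‖²` if `|a| ≥ ‖b‖²` and `c + a²/‖b‖²`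
otherwise; it coincides with the maximum over `β ∈ [0,1]` of `c + 2|a|β - ‖b‖²β²`. -/
theorem holevo_mld_scalar_identity (a c b₁ b₂ : ℝ) (hb : ¬(b₁ = 0 ∧ b₂ = 0)) :
    let nb := b₁ ^ 2 + b₂ ^ 2
    let v := if nb ≤ |a| then c + 2 * |a| - nb else c + a ^ 2 / nb
    IsLeast {x : ℝ | ∃ f₁ f₂ : ℝ,
        x = c + (f₁ ^ 2 + f₂ ^ 2) + 2 * |a + b₂ * f₁ - b₁ * f₂|} v ∧
    IsGreatest {x : ℝ | ∃ β ∈ Set.Icc (0 : ℝ) 1,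
        x = c + 2 * |a| * β - nb * β ^ 2} v := by
  have hnb : 0 < b₁ ^ 2 + b₂ ^ 2 := by
    rcases not_and_or.mp hb with h | h <;> positivity
  intro nb v
  have hnbdef : nb = b₁ ^ 2 + b₂ ^ 2 := rfl
  have hnbpos : 0 < nb := hnb
  constructor
  · constructor
    · -- membership in the feasible set
      by_cases hc : nb ≤ |a|
      · have hv : v = c + 2 * |a| - nb := if_pos hc
        rcases le_or_gt 0 a with ha | ha
        · refine ⟨-b₂, b₁, ?_⟩
          have h1 : |a| = a := abs_of_nonneg ha
          have h2 : a + b₂ * (-b₂) - b₁ * b₁ = a - nb := by rw [hnbdef]; ring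
          have h3 : 0 ≤ a - nb := by rw [h1] at hc; linarith
          rw [hv, h2, abs_of_nonneg h3, h1, hnbdef]; ring
        · refine ⟨b₂, -b₁, ?_⟩
          have h1 : |a| = -a := abs_of_neg ha
          have h2 : a + b₂ * b₂ - b₁ * (-b₁) = a + nb := by rw [hnbdef]; ring
          have h3 : a + nb ≤ 0 := by rw [h1] at hc; linarith
          rw [hv, h2, abs_of_nonpos h3, h1, hnbdef]; ring
      · have hv : v = c + a ^ 2 / nb := if_neg hc
        have hlt : |a| < nb := lt_of_not_ge hc
        refine ⟨-(a / nb) * b₂, a / nb * b₁, ?_⟩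
        have h2 : a + b₂ * (-(a / nb) * b₂) - b₁ * (a / nb * b₁) = 0 := by
          field_simp
          rw [hnbdef]; ring
        rw [hv, h2, abs_zero]
        have : (-(a / nb) * b₂) ^ 2 + (a / nb * b₁) ^ 2 = a ^ 2 / nb := by
          field_simp
          rw [hnbdef]; ring
        rw [this]; ring
    · -- lower bound
      rintro x ⟨f₁, f₂, rfl⟩
      set u := b₂ * f₁ - b₁ * f₂ with hu
      have hCS : u ^ 2 ≤ nb * (f₁ ^ 2 + f₂ ^ 2) := by
        rw [hnbdef, hu]; nlinarith [sq_nonneg (b₁ * f₁ + b₂ * f₂)]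
      have habs : |a| - |u| ≤ |a + u| := by
        have := abs_add_le (a + u) (-u)
        simp at this
        calc |a| - |u| = |a + u + -u| - |u| := by ring_nf
          _ ≤ |a + u| + |u| - |u| := by
              have := abs_add_le (a + u) (-u)
              rw [abs_neg] at this; linarith
          _ = |a + u| := by ring
      have hA : 0 ≤ |a + u| := abs_nonneg _
      have husq : |u| ^ 2 = u ^ 2 := sq_abs u
      have hasq : |a| ^ 2 = a ^ 2 := sq_abs a
      have hrw : a + b₂ * f₁ - b₁ * f₂ = a + u := by rw [hu]; ring
      rw [hrw]
      by_cases hc : nb ≤ |a|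
      · have hv : v = c + 2 * |a| - nb := if_pos hc
        rw [hv]
        nlinarith [sq_nonneg (|u| - nb), mul_le_mul_of_nonneg_left habs
          (by positivity : (0:ℝ) ≤ 2 * nb), hCS, hnbpos]
      · have hv : v = c + a ^ 2 / nb := if_neg hc
        have hlt : |a| < nb := lt_of_not_ge hc
        rw [hv]
        have key : a ^ 2 / nb ≤ (f₁ ^ 2 + f₂ ^ 2) + 2 * |a + u| := by
          rw [div_le_iff₀ hnbpos]
          nlinarith [sq_nonneg (|u| - |a|), mul_le_mul_of_nonneg_left habs
            (by positivity : (0:ℝ) ≤ 2 * |a|),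
            mul_nonneg hA (le_of_lt (sub_pos.mpr hlt)), hCS, abs_nonneg a]
        linarith
  · constructor
    · -- membership in dual feasible set
      by_cases hc : nb ≤ |a|
      · have hv : v = c + 2 * |a| - nb := if_pos hc
        exact ⟨1, ⟨zero_le_one, le_refl 1⟩, by rw [hv]; ring⟩
      · have hv : v = c + a ^ 2 / nb := if_neg hc
        have hlt : |a| < nb := lt_of_not_ge hc
        refine ⟨|a| / nb, ⟨by positivity, ?_⟩, ?_⟩
        · rw [div_le_one hnbpos]; exact hlt.le
        · rw [hv]
          have : 2 * |a| * (|a| / nb) - nb * (|a| / nb) ^ 2 = a ^ 2 / nb := by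
            field_simp
            linear_combination sq_abs a
          linarith
    · -- upper bound
      rintro x ⟨β, ⟨hβ0, hβ1⟩, rfl⟩
      by_cases hc : nb ≤ |a|
      · have hv : v = c + 2 * |a| - nb := if_pos hc
        rw [hv]
        nlinarith [mul_nonneg (sub_nonneg.2 hβ1) (sub_nonneg.2 hc),
          mul_nonneg hnbpos.le (sq_nonneg (1 - β))]
      · have hv : v = c + a ^ 2 / nb := if_neg hc
        rw [hv]
        have key : 2 * |a| * β - nb * β ^ 2 ≤ a ^ 2 / nb := by
          rw [le_div_iff₀ hnbpos]
          nlinarith [sq_nonneg (|a| - nb * β), sq_abs a]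
        linarith
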